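/- Let N be a natural number and let u and v be nontrivial coprime divisors of N (i.e. u ∣ N, v ∣ N, 1 < u < N, 1 < v < N, gcd(u, v) = 1). Let b be an integer and f ∈ ℤ[X] a digit polynomial of N to base b such that (1) gcd(lc f, N) = 1, where lc f is the leading coefficient of f, and (2) d := deg f is smaller than the largest prime factor of v. Then there exists an integer x with u ∣ f(x) and v ∤ f(x). -/

import Mathlib

/-- Let `u, v` be nontrivial coprime divisors of `N`, `b ∈ ℤ` and `f ∈ ℤ[X]` a digit
polynomial of `N` to base `b` (i.e. `f(b) = N`) such that the leading coefficient of `f`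
is coprime to `N` and `deg f` is smaller than the largest prime factor of `v`.
Then there is an integer `x` with `u ∣ f(x)` and `v ∤ f(x)`. -/
theorem digit_poly_exists_suitable (N u v : ℕ) (hu : u ∣ N) (hv : v ∣ N)
    (hu1 : 1 < u) (huN : u < N) (hv1 : 1 < v) (hvN : v < N)
    (huv : Nat.Coprime u v)
    (b : ℤ) (f : Polynomial ℤ) (hf : f.eval b = (N : ℤ))
    (hlc : Int.gcd f.leadingCoeff (N : ℤ) = 1)
    (hne : v.primeFactors.Nonempty)
    (hdeg : f.natDegree < v.primeFactors.max' hne) :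
    ∃ x : ℤ, (u : ℤ) ∣ f.eval x ∧ ¬ (v : ℤ) ∣ f.eval x := by
  set p := v.primeFactors.max' hne with hp
  have hpmem : p ∈ v.primeFactors := Finset.max'_mem _ hne
  have hpp : p.Prime := Nat.prime_of_mem_primeFactors hpmem
  have hpv : p ∣ v := Nat.dvd_of_mem_primeFactors hpmem
  have hpN : p ∣ N := hpv.trans hv
  haveI : Fact p.Prime := ⟨hpp⟩
  -- f mod p is nonzero
  have hlcp : ¬ (p : ℤ) ∣ f.leadingCoeff := by
    intro hdvd
    have h1 : (p : ℤ) ∣ (Int.gcd f.leadingCoeff (N : ℤ) : ℤ) :=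
      Int.dvd_coe_gcd hdvd (Int.natCast_dvd_natCast.mpr hpN)
    rw [hlc] at h1
    exact hpp.one_lt.ne' (Nat.eq_one_of_dvd_one (by exact_mod_cast h1))
  set g : Polynomial (ZMod p) := f.map (Int.castRingHom (ZMod p)) with hg
  have hgne : g ≠ 0 := by
    intro h0
    apply hlcp
    have : (f.leadingCoeff : ZMod p) = 0 := by
      have h1 : g.coeff f.natDegree = ((f.coeff f.natDegree : ℤ) : ZMod p) := by
        simp [hg, Polynomial.coeff_map]
      rw [h0, Polynomial.coeff_zero] at h1
      rw [Polynomial.leadingCoeff]; exact h1.symm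
    exact (ZMod.intCast_zmod_eq_zero_iff_dvd _ _).mp this
  have hgdeg : g.natDegree ≤ f.natDegree := Polynomial.natDegree_map_le
  have hcard : (g.natDegree : Cardinal) < Cardinal.mk (ZMod p) := by
    rw [Cardinal.mk_fintype, ZMod.card]
    exact_mod_cast lt_of_le_of_lt hgdeg hdeg
  obtain ⟨y, hy⟩ := Polynomial.exists_eval_ne_zero_of_natDegree_lt_card g hgne hcard
  -- lift y to an integer x₀ with p ∤ f(x₀)
  set x₀ : ℤ := (y.val : ℤ) with hx₀
  have hyx₀ : ((x₀ : ℤ) : ZMod p) = y := by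
    simp [hx₀, ZMod.natCast_val, ZMod.intCast_cast]
  have hpx₀ : ¬ (p : ℤ) ∣ f.eval x₀ := by
    intro hdvd
    apply hy
    have : ((f.eval x₀ : ℤ) : ZMod p) = 0 := (ZMod.intCast_zmod_eq_zero_iff_dvd _ _).mpr hdvd
    rw [← this, ← hyx₀, hg, Polynomial.eval_map]
    exact (Polynomial.eval₂_at_apply (Int.castRingHom (ZMod p)) x₀).symm ▸
      (Polynomial.hom_eval₂ f (RingHom.id ℤ) (Int.castRingHom (ZMod p)) x₀ ▸ by
        simp [Polynomial.eval₂_at_apply])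
  -- CRT: choose x ≡ b mod u, x ≡ x₀ mod p
  have hcop : IsCoprime (u : ℤ) (p : ℤ) := by
    rw [Int.isCoprime_iff_gcd_eq_one]
    have : Nat.Coprime u p := Nat.Coprime.coprime_dvd_right hpv huv
    simpa [Int.gcd_natCast_natCast] using this
  obtain ⟨a, c, hac⟩ := hcop
  set x : ℤ := b * (c * p) + x₀ * (a * u) with hx
  have hxu : (u : ℤ) ∣ x - b := by
    have : x - b = (x₀ - b) * a * u := by
      have : b * (c * p) = b * (1 - a * u) := by rw [← hac]; ring
      rw [hx, this]; ring
    exact this ▸ ⟨(x₀ - b) * a, by ring⟩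
  have hxp : (p : ℤ) ∣ x - x₀ := by
    have : x - x₀ = (b - x₀) * c * p := by
      have : x₀ * (a * u) = x₀ * (1 - c * p) := by rw [← hac]; ring
      rw [hx, this]; ring
    exact this ▸ ⟨(b - x₀) * c, by ring⟩
  refine ⟨x, ?_, ?_⟩
  · have h1 : (u : ℤ) ∣ f.eval x - f.eval b :=
      dvd_trans hxu (Polynomial.sub_dvd_eval_sub x b f)
    have h2 : (u : ℤ) ∣ f.eval b := by
      rw [hf]; exact_mod_cast Int.natCast_dvd_natCast.mpr hu
    simpa using dvd_add h1 h2
  · intro hdvd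
    apply hpx₀
    have h1 : (p : ℤ) ∣ f.eval x - f.eval x₀ :=
      dvd_trans hxp (Polynomial.sub_dvd_eval_sub x x₀ f)
    have h2 : (p : ℤ) ∣ f.eval x := dvd_trans (Int.natCast_dvd_natCast.mpr hpv) hdvd
    simpa using dvd_sub h2 h1
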